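/- For every d ≥ 12, there exists a d × d standardized symmetric positive semidefinite matrix that is not a Spearman's rho matrix; namely the block-diagonal matrix M_d = diag(M, I_{d-12}), where M is the 12 × 12 Gram matrix of the twelve vectors e₁,...,e₄ and (1/2)(1,±1,±1,±1). -/

import Mathlib

open MeasureTheory
open scoped Matrix

/-- `R` is a Spearman's rho matrix if there is a random vector `X` with continuous
marginal distributions whose matrix of pairwise Spearman rank correlations
`12 * E[F_i(X_i) F_j(X_j)] - 3` is `R`, where `F_i` is the cdf of `X_i`. -/
def IsSpearmanMatrix {d : ℕ} (R : Matrix (Fin d) (Fin d) ℝ) : Prop :=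
  ∃ (Ω : Type) (_ : MeasurableSpace Ω) (μ : Measure Ω) (_ : IsProbabilityMeasure μ)
    (X : Ω → Fin d → ℝ),
    (∀ i, Measurable fun ω => X ω i) ∧
    (∀ i (x : ℝ), Measure.map (fun ω => X ω i) μ {x} = 0) ∧
    ∀ i j, R i j =
      12 * (∫ ω, ProbabilityTheory.cdf (Measure.map (fun ω' => X ω' i) μ) (X ω i) *
        ProbabilityTheory.cdf (Measure.map (fun ω' => X ω' j) μ) (X ω j) ∂μ) - 3

noncomputable def paperVecs : Matrix (Fin 12) (Fin 4) ℝ :=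
  !![1, 0, 0, 0;
     0, 1, 0, 0;
     0, 0, 1, 0;
     0, 0, 0, 1;
     1/2,  1/2,  1/2,  1/2;
     1/2,  1/2,  1/2, -1/2;
     1/2,  1/2, -1/2,  1/2;
     1/2,  1/2, -1/2, -1/2;
     1/2, -1/2,  1/2,  1/2;
     1/2, -1/2,  1/2, -1/2;
     1/2, -1/2, -1/2,  1/2;
     1/2, -1/2, -1/2, -1/2]

/-- The Gram matrix of the twelve vectors. -/
noncomputable def gramM : Matrix (Fin 12) (Fin 12) ℝ := paperVecs * paperVecsᵀ

/-- The block-diagonal matrix diag(M, I_{d-12}) in dimension d. -/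
noncomputable def gramMd (d : ℕ) : Matrix (Fin d) (Fin d) ℝ := fun i j =>
  if hi : (i : ℕ) < 12 then
    (if hj : (j : ℕ) < 12 then gramM ⟨i, hi⟩ ⟨j, hj⟩ else 0)
  else (if i = j then 1 else 0)

namespace SpearmanAux

lemma gramM_apply (i j : Fin 12) : gramM i j = ∑ c : Fin 4, paperVecs i c * paperVecs j c := by
  simp [gramM, Matrix.mul_apply, Matrix.transpose_apply]

lemma gramM_diag (i : Fin 12) : gramM i i = 1 := by
  rw [gramM_apply]
  fin_cases i <;> norm_num [paperVecs, Fin.sum_univ_four, Matrix.cons_val_two, Matrix.cons_val_three]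

noncomputable def bmat (d : ℕ) : Matrix (Fin d) (Fin d) ℝ := fun i k =>
  if hi : (i : ℕ) < 12 then
    (if hk : (k : ℕ) < 4 then paperVecs ⟨i, hi⟩ ⟨k, hk⟩ else 0)
  else (if i = k then 1 else 0)

lemma gramMd_eq (d : ℕ) (hd : 12 ≤ d) : gramMd d = bmat d * (bmat d)ᵀ := by
  funext i j
  rw [Matrix.mul_apply]
  simp only [Matrix.transpose_apply]
  symm
  by_cases hi : (i : ℕ) < 12
  · by_cases hj : (j : ℕ) < 12
    · set g : ℕ → ℝ := fun n =>
        if h : n < 4 then paperVecs ⟨i, hi⟩ ⟨n, h⟩ * paperVecs ⟨j, hj⟩ ⟨n, h⟩ else 0 with hg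
      have step1 : ∀ k : Fin d, bmat d i k * bmat d j k = g (k : ℕ) := by
        intro k
        by_cases hk : (k : ℕ) < 4 <;> simp [bmat, hi, hj, hk, hg]
      calc ∑ k : Fin d, bmat d i k * bmat d j k = ∑ k : Fin d, g (k : ℕ) := by
            exact Finset.sum_congr rfl fun k _ => step1 k
        _ = ∑ n ∈ Finset.range d, g n := Fin.sum_univ_eq_sum_range g d
        _ = ∑ n ∈ Finset.range 4, g n := by
            refine (Finset.sum_subset (Finset.range_subset_range.2 (by omega)) ?_).symm
            intro n _ hn
            simp only [Finset.mem_range] at hn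
            simp [hg, hn]
        _ = ∑ c : Fin 4, g (c : ℕ) := (Fin.sum_univ_eq_sum_range g 4).symm
        _ = gramM ⟨i, hi⟩ ⟨j, hj⟩ := by
            rw [gramM_apply]
            refine Finset.sum_congr rfl fun c _ => ?_
            simp [hg, c.2]
        _ = gramMd d i j := by simp [gramMd, hi, hj]
    · have hz : ∀ k : Fin d, bmat d i k * bmat d j k = 0 := by
        intro k
        by_cases hk : j = k
        · subst hk
          have h4 : ¬ ((j : ℕ) < 4) := by omega
          simp [bmat, hi, h4]
        · have : bmat d j k = 0 := by simp [bmat, hj, hk]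
          rw [this, mul_zero]
      rw [Finset.sum_eq_zero fun k _ => hz k]
      simp [gramMd, hi, hj]
  · have hsum : ∑ k : Fin d, bmat d i k * bmat d j k = bmat d j i := by
      rw [Finset.sum_eq_single i]
      · simp [bmat, hi]
      · intro k _ hk
        have : bmat d i k = 0 := by
          simp only [bmat, dif_neg hi, if_neg (show i ≠ k from fun h => hk h.symm)]
        rw [this, zero_mul]
      · simp
    rw [hsum]
    by_cases hj : (j : ℕ) < 12
    · have hne : i ≠ j := fun h => hi (h ▸ hj)
      have h4 : ¬ ((i : ℕ) < 4) := by omega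
      simp [bmat, gramMd, hj, h4, hi, hne]
    · simp only [bmat, gramMd, dif_neg hi, dif_neg hj]
      by_cases h : i = j <;> simp [h, eq_comm]

lemma gramMd_posSemidef (d : ℕ) (hd : 12 ≤ d) : (gramMd d).PosSemidef := by
  rw [gramMd_eq d hd]
  have := Matrix.posSemidef_self_mul_conjTranspose (bmat d)
  rwa [Matrix.conjTranspose_eq_transpose_of_trivial] at this

lemma gramMd_diag (d : ℕ) (i : Fin d) : gramMd d i i = 1 := by
  by_cases hi : (i : ℕ) < 12
  · simp [gramMd, hi, gramM_diag]
  · simp [gramMd, hi]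

open ProbabilityTheory Set Filter
open scoped Topology

variable (ν : Measure ℝ) [IsProbabilityMeasure ν]

lemma leftLim_cdf_eq (hatom : ∀ x : ℝ, ν {x} = 0) (x : ℝ) :
    Function.leftLim (cdf ν) x = cdf ν x := by
  have hm : (cdf ν).measure = ν := measure_cdf ν
  have hs := (cdf ν).measure_singleton x
  rw [hm, hatom] at hs
  have h1 : cdf ν x - Function.leftLim (cdf ν) x ≤ 0 := by
    by_contra h
    push_neg at h
    rw [eq_comm, ENNReal.ofReal_eq_zero] at hs
    linarith
  have h2 := (monotone_cdf ν).leftLim_le (le_refl x)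
  linarith

lemma cdf_sublevel (hatom : ∀ x : ℝ, ν {x} = 0) {t : ℝ} (ht0 : 0 ≤ t) (ht1 : t < 1) :
    ν {x | cdf ν x ≤ t} = ENNReal.ofReal t := by
  set f := cdf ν
  set S := {x | f x ≤ t} with hSdef
  by_cases hne : S.Nonempty
  · have hbdd : BddAbove S := by
      have hev : ∀ᶠ x in atTop, t < f x :=
        (tendsto_cdf_atTop ν).eventually_const_lt ht1
      obtain ⟨x₀, hx₀⟩ := hev.exists_forall_of_atTop
      refine ⟨x₀, fun x hx => ?_⟩
      by_contra h
      push_neg at h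
      exact absurd hx (not_le.2 (hx₀ x h.le))
    set c := sSup S with hc
    have hcS : c ∈ S := by
      by_contra hcS
      -- then f c = leftLim f c ≤ t, so c ∈ S, contradiction
      have hlb : ∀ x, x < c → f x ≤ t := by
        intro x hx
        obtain ⟨y, hyS, hxy⟩ := exists_lt_of_lt_csSup hne hx
        exact le_trans ((monotone_cdf ν) hxy.le) hyS
      have htend2 : Tendsto f (𝓝[<] c) (𝓝 (Function.leftLim f c)) :=
        (monotone_cdf ν).tendsto_leftLim c
      have hle : Function.leftLim f c ≤ t := by
        refine le_of_tendsto htend2 ?_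
        filter_upwards [self_mem_nhdsWithin] with x hx
        exact hlb x hx
      rw [leftLim_cdf_eq ν hatom c] at hle
      exact hcS hle
    have hfcge : t ≤ f c := by
      have htend : Tendsto f (𝓝[>] c) (𝓝 (f c)) :=
        ((cdf ν).right_continuous c).tendsto.mono_left
          (nhdsWithin_mono c Ioi_subset_Ici_self)
      refine ge_of_tendsto htend ?_
      filter_upwards [self_mem_nhdsWithin] with x hx
      by_contra h
      push_neg at h
      exact absurd (le_csSup hbdd h.le) (not_le.2 hx)
    have hfc : f c = t := le_antisymm hcS hfcge
    have hSeq : S = Iic c := by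
      ext x
      constructor
      · intro hx; exact le_csSup hbdd hx
      · intro hx; exact le_trans ((monotone_cdf ν) hx) hcS
    rw [hSeq, ← ofReal_cdf ν c, hfc]
  · have ht : t = 0 := by
      by_contra h
      have htpos : 0 < t := lt_of_le_of_ne ht0 (Ne.symm h)
      have hev : ∀ᶠ x in atBot, f x < t :=
        (tendsto_cdf_atBot ν).eventually_lt_const htpos
      obtain ⟨x, hx⟩ := hev.exists
      exact hne ⟨x, hx.le⟩
    rw [Set.not_nonempty_iff_eq_empty.1 hne, ht]
    simp

lemma map_cdf_eq_uniform (hatom : ∀ x : ℝ, ν {x} = 0) :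
    Measure.map (cdf ν) ν = volume.restrict (Set.Icc (0:ℝ) 1) := by
  have hmeas : Measurable (cdf ν) := (monotone_cdf ν).measurable
  haveI : IsProbabilityMeasure (Measure.map (cdf ν) ν) :=
    Measure.isProbabilityMeasure_map hmeas.aemeasurable
  haveI : IsProbabilityMeasure (volume.restrict (Set.Icc (0:ℝ) 1)) := by
    constructor
    rw [Measure.restrict_apply_univ, Real.volume_Icc]
    norm_num
  refine Measure.ext_of_Iic _ _ (fun t => ?_)
  rw [Measure.map_apply hmeas measurableSet_Iic, Measure.restrict_apply measurableSet_Iic]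
  rcases lt_or_ge t 0 with ht | ht0
  · have h1 : cdf ν ⁻¹' Iic t = ∅ := by
      ext x
      simp only [mem_preimage, mem_Iic, mem_empty_iff_false, iff_false, not_le]
      exact lt_of_lt_of_le ht (cdf_nonneg ν x)
    have h2 : Iic t ∩ Icc (0:ℝ) 1 = ∅ := by
      ext x
      simp only [mem_inter_iff, mem_Iic, mem_Icc, mem_empty_iff_false, iff_false]
      rintro ⟨h, h0, -⟩
      linarith
    rw [h1, h2]
    simp
  · rcases lt_or_ge t 1 with ht1 | ht1
    · have h1 : cdf ν ⁻¹' Iic t = {x | cdf ν x ≤ t} := rfl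
      have h2 : Iic t ∩ Icc (0:ℝ) 1 = Icc 0 t := by
        ext x
        simp only [mem_inter_iff, mem_Iic, mem_Icc]
        constructor
        · rintro ⟨h, h0, -⟩; exact ⟨h0, h⟩
        · rintro ⟨h0, h⟩; exact ⟨h, h0, by linarith⟩
      rw [h1, h2, cdf_sublevel ν hatom ht0 ht1, Real.volume_Icc]
      norm_num
    · have h1 : cdf ν ⁻¹' Iic t = Set.univ := by
        ext x
        simp only [mem_preimage, mem_Iic, mem_univ, iff_true]
        exact le_trans (cdf_le_one ν x) ht1
      have h2 : Iic t ∩ Icc (0:ℝ) 1 = Icc 0 1 := by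
        ext x
        simp only [mem_inter_iff, mem_Iic, mem_Icc]
        constructor
        · rintro ⟨h, h0, hx1⟩; exact ⟨h0, hx1⟩
        · rintro ⟨h0, hx1⟩; exact ⟨by linarith, h0, hx1⟩
      rw [h1, h2, Real.volume_Icc]
      simp

lemma int_id : ∫ x in Icc (0:ℝ) 1, x = 1/2 := by
  rw [integral_Icc_eq_integral_Ioc, ← intervalIntegral.integral_of_le (by norm_num : (0:ℝ) ≤ 1)]
  simp

lemma int_absval : ∫ x in Icc (0:ℝ) 1, |x - 1/2| = 1/4 := by
  have hcont : Continuous (fun x : ℝ => |x - 1/2|) := by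
    exact continuous_abs.comp (continuous_id.sub continuous_const)
  have hii : ∀ a b : ℝ, IntervalIntegrable (fun x : ℝ => |x - 1/2|) volume a b :=
    fun a b => hcont.intervalIntegrable a b
  rw [integral_Icc_eq_integral_Ioc, ← intervalIntegral.integral_of_le (by norm_num : (0:ℝ) ≤ 1)]
  have h1 : ∫ x in (0:ℝ)..(1/2), |x - 1/2| = ∫ x in (0:ℝ)..(1/2), (1/2 - x) := by
    refine intervalIntegral.integral_congr (fun x hx => ?_)
    rw [uIcc_of_le (by norm_num)] at hx
    rw [abs_of_nonpos (by cases hx; linarith)]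
    ring
  have h2 : ∫ x in (1/2:ℝ)..1, |x - 1/2| = ∫ x in (1/2:ℝ)..1, (x - 1/2) := by
    refine intervalIntegral.integral_congr (fun x hx => ?_)
    rw [uIcc_of_le (by norm_num)] at hx
    rw [abs_of_nonneg (by cases hx; linarith)]
  rw [← intervalIntegral.integral_add_adjacent_intervals (hii 0 (1/2)) (hii (1/2) 1), h1, h2]
  rw [intervalIntegral.integral_sub intervalIntegrable_const (intervalIntegral.intervalIntegrable_id),
      intervalIntegral.integral_sub (intervalIntegral.intervalIntegrable_id) intervalIntegrable_const]
  simp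
  norm_num

noncomputable def wvec : Matrix (Fin 8) (Fin 12) ℝ :=
  !![-1/2,-1/2,-1/2,-1/2, 1,0,0,0,0,0,0,0;
     -1/2,-1/2,-1/2, 1/2, 0,1,0,0,0,0,0,0;
     -1/2,-1/2, 1/2,-1/2, 0,0,1,0,0,0,0,0;
     -1/2,-1/2, 1/2, 1/2, 0,0,0,1,0,0,0,0;
     -1/2, 1/2,-1/2,-1/2, 0,0,0,0,1,0,0,0;
     -1/2, 1/2,-1/2, 1/2, 0,0,0,0,0,1,0,0;
     -1/2, 1/2, 1/2,-1/2, 0,0,0,0,0,0,1,0;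
     -1/2, 1/2, 1/2, 1/2, 0,0,0,0,0,0,0,1]


@[simp] lemma wvec_0_0 : wvec 0 0 = -1/2 := rfl
@[simp] lemma wvec_0_1 : wvec 0 1 = -1/2 := rfl
@[simp] lemma wvec_0_2 : wvec 0 2 = -1/2 := rfl
@[simp] lemma wvec_0_3 : wvec 0 3 = -1/2 := rfl
@[simp] lemma wvec_0_4 : wvec 0 4 = 1 := rfl
@[simp] lemma wvec_0_5 : wvec 0 5 = 0 := rfl
@[simp] lemma wvec_0_6 : wvec 0 6 = 0 := rfl
@[simp] lemma wvec_0_7 : wvec 0 7 = 0 := rfl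
@[simp] lemma wvec_0_8 : wvec 0 8 = 0 := rfl
@[simp] lemma wvec_0_9 : wvec 0 9 = 0 := rfl
@[simp] lemma wvec_0_10 : wvec 0 10 = 0 := rfl
@[simp] lemma wvec_0_11 : wvec 0 11 = 0 := rfl
@[simp] lemma wvec_1_0 : wvec 1 0 = -1/2 := rfl
@[simp] lemma wvec_1_1 : wvec 1 1 = -1/2 := rfl
@[simp] lemma wvec_1_2 : wvec 1 2 = -1/2 := rfl
@[simp] lemma wvec_1_3 : wvec 1 3 = 1/2 := rfl
@[simp] lemma wvec_1_4 : wvec 1 4 = 0 := rfl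
@[simp] lemma wvec_1_5 : wvec 1 5 = 1 := rfl
@[simp] lemma wvec_1_6 : wvec 1 6 = 0 := rfl
@[simp] lemma wvec_1_7 : wvec 1 7 = 0 := rfl
@[simp] lemma wvec_1_8 : wvec 1 8 = 0 := rfl
@[simp] lemma wvec_1_9 : wvec 1 9 = 0 := rfl
@[simp] lemma wvec_1_10 : wvec 1 10 = 0 := rfl
@[simp] lemma wvec_1_11 : wvec 1 11 = 0 := rfl
@[simp] lemma wvec_2_0 : wvec 2 0 = -1/2 := rfl
@[simp] lemma wvec_2_1 : wvec 2 1 = -1/2 := rfl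
@[simp] lemma wvec_2_2 : wvec 2 2 = 1/2 := rfl
@[simp] lemma wvec_2_3 : wvec 2 3 = -1/2 := rfl
@[simp] lemma wvec_2_4 : wvec 2 4 = 0 := rfl
@[simp] lemma wvec_2_5 : wvec 2 5 = 0 := rfl
@[simp] lemma wvec_2_6 : wvec 2 6 = 1 := rfl
@[simp] lemma wvec_2_7 : wvec 2 7 = 0 := rfl
@[simp] lemma wvec_2_8 : wvec 2 8 = 0 := rfl
@[simp] lemma wvec_2_9 : wvec 2 9 = 0 := rfl
@[simp] lemma wvec_2_10 : wvec 2 10 = 0 := rfl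
@[simp] lemma wvec_2_11 : wvec 2 11 = 0 := rfl
@[simp] lemma wvec_3_0 : wvec 3 0 = -1/2 := rfl
@[simp] lemma wvec_3_1 : wvec 3 1 = -1/2 := rfl
@[simp] lemma wvec_3_2 : wvec 3 2 = 1/2 := rfl
@[simp] lemma wvec_3_3 : wvec 3 3 = 1/2 := rfl
@[simp] lemma wvec_3_4 : wvec 3 4 = 0 := rfl
@[simp] lemma wvec_3_5 : wvec 3 5 = 0 := rfl
@[simp] lemma wvec_3_6 : wvec 3 6 = 0 := rfl
@[simp] lemma wvec_3_7 : wvec 3 7 = 1 := rfl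
@[simp] lemma wvec_3_8 : wvec 3 8 = 0 := rfl
@[simp] lemma wvec_3_9 : wvec 3 9 = 0 := rfl
@[simp] lemma wvec_3_10 : wvec 3 10 = 0 := rfl
@[simp] lemma wvec_3_11 : wvec 3 11 = 0 := rfl
@[simp] lemma wvec_4_0 : wvec 4 0 = -1/2 := rfl
@[simp] lemma wvec_4_1 : wvec 4 1 = 1/2 := rfl
@[simp] lemma wvec_4_2 : wvec 4 2 = -1/2 := rfl
@[simp] lemma wvec_4_3 : wvec 4 3 = -1/2 := rfl
@[simp] lemma wvec_4_4 : wvec 4 4 = 0 := rfl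
@[simp] lemma wvec_4_5 : wvec 4 5 = 0 := rfl
@[simp] lemma wvec_4_6 : wvec 4 6 = 0 := rfl
@[simp] lemma wvec_4_7 : wvec 4 7 = 0 := rfl
@[simp] lemma wvec_4_8 : wvec 4 8 = 1 := rfl
@[simp] lemma wvec_4_9 : wvec 4 9 = 0 := rfl
@[simp] lemma wvec_4_10 : wvec 4 10 = 0 := rfl
@[simp] lemma wvec_4_11 : wvec 4 11 = 0 := rfl
@[simp] lemma wvec_5_0 : wvec 5 0 = -1/2 := rfl
@[simp] lemma wvec_5_1 : wvec 5 1 = 1/2 := rfl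
@[simp] lemma wvec_5_2 : wvec 5 2 = -1/2 := rfl
@[simp] lemma wvec_5_3 : wvec 5 3 = 1/2 := rfl
@[simp] lemma wvec_5_4 : wvec 5 4 = 0 := rfl
@[simp] lemma wvec_5_5 : wvec 5 5 = 0 := rfl
@[simp] lemma wvec_5_6 : wvec 5 6 = 0 := rfl
@[simp] lemma wvec_5_7 : wvec 5 7 = 0 := rfl
@[simp] lemma wvec_5_8 : wvec 5 8 = 0 := rfl
@[simp] lemma wvec_5_9 : wvec 5 9 = 1 := rfl
@[simp] lemma wvec_5_10 : wvec 5 10 = 0 := rfl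
@[simp] lemma wvec_5_11 : wvec 5 11 = 0 := rfl
@[simp] lemma wvec_6_0 : wvec 6 0 = -1/2 := rfl
@[simp] lemma wvec_6_1 : wvec 6 1 = 1/2 := rfl
@[simp] lemma wvec_6_2 : wvec 6 2 = 1/2 := rfl
@[simp] lemma wvec_6_3 : wvec 6 3 = -1/2 := rfl
@[simp] lemma wvec_6_4 : wvec 6 4 = 0 := rfl
@[simp] lemma wvec_6_5 : wvec 6 5 = 0 := rfl
@[simp] lemma wvec_6_6 : wvec 6 6 = 0 := rfl
@[simp] lemma wvec_6_7 : wvec 6 7 = 0 := rfl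
@[simp] lemma wvec_6_8 : wvec 6 8 = 0 := rfl
@[simp] lemma wvec_6_9 : wvec 6 9 = 0 := rfl
@[simp] lemma wvec_6_10 : wvec 6 10 = 1 := rfl
@[simp] lemma wvec_6_11 : wvec 6 11 = 0 := rfl
@[simp] lemma wvec_7_0 : wvec 7 0 = -1/2 := rfl
@[simp] lemma wvec_7_1 : wvec 7 1 = 1/2 := rfl
@[simp] lemma wvec_7_2 : wvec 7 2 = 1/2 := rfl
@[simp] lemma wvec_7_3 : wvec 7 3 = 1/2 := rfl
@[simp] lemma wvec_7_4 : wvec 7 4 = 0 := rfl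
@[simp] lemma wvec_7_5 : wvec 7 5 = 0 := rfl
@[simp] lemma wvec_7_6 : wvec 7 6 = 0 := rfl
@[simp] lemma wvec_7_7 : wvec 7 7 = 0 := rfl
@[simp] lemma wvec_7_8 : wvec 7 8 = 0 := rfl
@[simp] lemma wvec_7_9 : wvec 7 9 = 0 := rfl
@[simp] lemma wvec_7_10 : wvec 7 10 = 0 := rfl
@[simp] lemma wvec_7_11 : wvec 7 11 = 1 := rfl

@[simp] lemma finSucc_2_3 : Fin.succ (2 : Fin 3) = (3 : Fin 4) := rfl
@[simp] lemma finSucc_2_4 : Fin.succ (2 : Fin 4) = (3 : Fin 5) := rfl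
@[simp] lemma finSucc_2_5 : Fin.succ (2 : Fin 5) = (3 : Fin 6) := rfl
@[simp] lemma finSucc_2_6 : Fin.succ (2 : Fin 6) = (3 : Fin 7) := rfl
@[simp] lemma finSucc_2_7 : Fin.succ (2 : Fin 7) = (3 : Fin 8) := rfl
@[simp] lemma finSucc_2_8 : Fin.succ (2 : Fin 8) = (3 : Fin 9) := rfl
@[simp] lemma finSucc_2_9 : Fin.succ (2 : Fin 9) = (3 : Fin 10) := rfl
@[simp] lemma finSucc_2_10 : Fin.succ (2 : Fin 10) = (3 : Fin 11) := rfl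
@[simp] lemma finSucc_2_11 : Fin.succ (2 : Fin 11) = (3 : Fin 12) := rfl
@[simp] lemma finSucc_3_4 : Fin.succ (3 : Fin 4) = (4 : Fin 5) := rfl
@[simp] lemma finSucc_3_5 : Fin.succ (3 : Fin 5) = (4 : Fin 6) := rfl
@[simp] lemma finSucc_3_6 : Fin.succ (3 : Fin 6) = (4 : Fin 7) := rfl
@[simp] lemma finSucc_3_7 : Fin.succ (3 : Fin 7) = (4 : Fin 8) := rfl
@[simp] lemma finSucc_3_8 : Fin.succ (3 : Fin 8) = (4 : Fin 9) := rfl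
@[simp] lemma finSucc_3_9 : Fin.succ (3 : Fin 9) = (4 : Fin 10) := rfl
@[simp] lemma finSucc_3_10 : Fin.succ (3 : Fin 10) = (4 : Fin 11) := rfl
@[simp] lemma finSucc_3_11 : Fin.succ (3 : Fin 11) = (4 : Fin 12) := rfl
@[simp] lemma finSucc_4_5 : Fin.succ (4 : Fin 5) = (5 : Fin 6) := rfl
@[simp] lemma finSucc_4_6 : Fin.succ (4 : Fin 6) = (5 : Fin 7) := rfl
@[simp] lemma finSucc_4_7 : Fin.succ (4 : Fin 7) = (5 : Fin 8) := rfl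
@[simp] lemma finSucc_4_8 : Fin.succ (4 : Fin 8) = (5 : Fin 9) := rfl
@[simp] lemma finSucc_4_9 : Fin.succ (4 : Fin 9) = (5 : Fin 10) := rfl
@[simp] lemma finSucc_4_10 : Fin.succ (4 : Fin 10) = (5 : Fin 11) := rfl
@[simp] lemma finSucc_4_11 : Fin.succ (4 : Fin 11) = (5 : Fin 12) := rfl
@[simp] lemma finSucc_5_6 : Fin.succ (5 : Fin 6) = (6 : Fin 7) := rfl
@[simp] lemma finSucc_5_7 : Fin.succ (5 : Fin 7) = (6 : Fin 8) := rfl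
@[simp] lemma finSucc_5_8 : Fin.succ (5 : Fin 8) = (6 : Fin 9) := rfl
@[simp] lemma finSucc_5_9 : Fin.succ (5 : Fin 9) = (6 : Fin 10) := rfl
@[simp] lemma finSucc_5_10 : Fin.succ (5 : Fin 10) = (6 : Fin 11) := rfl
@[simp] lemma finSucc_5_11 : Fin.succ (5 : Fin 11) = (6 : Fin 12) := rfl
@[simp] lemma finSucc_6_7 : Fin.succ (6 : Fin 7) = (7 : Fin 8) := rfl
@[simp] lemma finSucc_6_8 : Fin.succ (6 : Fin 8) = (7 : Fin 9) := rfl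
@[simp] lemma finSucc_6_9 : Fin.succ (6 : Fin 9) = (7 : Fin 10) := rfl
@[simp] lemma finSucc_6_10 : Fin.succ (6 : Fin 10) = (7 : Fin 11) := rfl
@[simp] lemma finSucc_6_11 : Fin.succ (6 : Fin 11) = (7 : Fin 12) := rfl
@[simp] lemma finSucc_7_8 : Fin.succ (7 : Fin 8) = (8 : Fin 9) := rfl
@[simp] lemma finSucc_7_9 : Fin.succ (7 : Fin 9) = (8 : Fin 10) := rfl
@[simp] lemma finSucc_7_10 : Fin.succ (7 : Fin 10) = (8 : Fin 11) := rfl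
@[simp] lemma finSucc_7_11 : Fin.succ (7 : Fin 11) = (8 : Fin 12) := rfl
@[simp] lemma finSucc_8_9 : Fin.succ (8 : Fin 9) = (9 : Fin 10) := rfl
@[simp] lemma finSucc_8_10 : Fin.succ (8 : Fin 10) = (9 : Fin 11) := rfl
@[simp] lemma finSucc_8_11 : Fin.succ (8 : Fin 11) = (9 : Fin 12) := rfl
@[simp] lemma finSucc_9_10 : Fin.succ (9 : Fin 10) = (10 : Fin 11) := rfl
@[simp] lemma finSucc_9_11 : Fin.succ (9 : Fin 11) = (10 : Fin 12) := rfl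
@[simp] lemma finSucc_10_11 : Fin.succ (10 : Fin 11) = (11 : Fin 12) := rfl


lemma signcase (y0 y1 y2 y3 z0 z1 z2 z3 z4 z5 z6 z7 : ℝ)
    (h0 : 2*z0 = y0+y1+y2+y3) (h1 : 2*z1 = y0+y1+y2-y3)
    (h2 : 2*z2 = y0+y1-y2+y3) (h3 : 2*z3 = y0+y1-y2-y3)
    (h4 : 2*z4 = y0-y1+y2+y3) (h5 : 2*z5 = y0-y1+y2-y3)
    (h6 : 2*z6 = y0-y1-y2+y3) (h7 : 2*z7 = y0-y1-y2-y3) :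
    ∃ z ∈ ({z0,z1,z2,z3,z4,z5,z6,z7} : Finset ℝ),
      2*|z| = |y0|+|y1|+|y2|+|y3| := by
  rcases le_or_gt 0 y0 with s0 | s0 <;> rcases le_or_gt 0 y1 with s1 | s1 <;>
    rcases le_or_gt 0 y2 with s2 | s2 <;> rcases le_or_gt 0 y3 with s3 | s3
  · exact ⟨z0, by simp, by rw [abs_of_nonneg (by linarith), abs_of_nonneg s0,
      abs_of_nonneg s1, abs_of_nonneg s2, abs_of_nonneg s3]; linarith⟩
  · exact ⟨z1, by simp, by rw [abs_of_nonneg (by linarith), abs_of_nonneg s0,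
      abs_of_nonneg s1, abs_of_nonneg s2, abs_of_neg s3]; linarith⟩
  · exact ⟨z2, by simp, by rw [abs_of_nonneg (by linarith), abs_of_nonneg s0,
      abs_of_nonneg s1, abs_of_neg s2, abs_of_nonneg s3]; linarith⟩
  · exact ⟨z3, by simp, by rw [abs_of_nonneg (by linarith), abs_of_nonneg s0,
      abs_of_nonneg s1, abs_of_neg s2, abs_of_neg s3]; linarith⟩
  · exact ⟨z4, by simp, by rw [abs_of_nonneg (by linarith), abs_of_nonneg s0,
      abs_of_neg s1, abs_of_nonneg s2, abs_of_nonneg s3]; linarith⟩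
  · exact ⟨z5, by simp, by rw [abs_of_nonneg (by linarith), abs_of_nonneg s0,
      abs_of_neg s1, abs_of_nonneg s2, abs_of_neg s3]; linarith⟩
  · exact ⟨z6, by simp, by rw [abs_of_nonneg (by linarith), abs_of_nonneg s0,
      abs_of_neg s1, abs_of_neg s2, abs_of_nonneg s3]; linarith⟩
  · exact ⟨z7, by simp, by rw [abs_of_nonneg (by linarith), abs_of_nonneg s0,
      abs_of_neg s1, abs_of_neg s2, abs_of_neg s3]; linarith⟩
  · exact ⟨z7, by simp, by rw [abs_of_nonpos (by linarith), abs_of_neg s0,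
      abs_of_nonneg s1, abs_of_nonneg s2, abs_of_nonneg s3]; linarith⟩
  · exact ⟨z6, by simp, by rw [abs_of_nonpos (by linarith), abs_of_neg s0,
      abs_of_nonneg s1, abs_of_nonneg s2, abs_of_neg s3]; linarith⟩
  · exact ⟨z5, by simp, by rw [abs_of_nonpos (by linarith), abs_of_neg s0,
      abs_of_nonneg s1, abs_of_neg s2, abs_of_nonneg s3]; linarith⟩
  · exact ⟨z4, by simp, by rw [abs_of_nonpos (by linarith), abs_of_neg s0,
      abs_of_nonneg s1, abs_of_neg s2, abs_of_neg s3]; linarith⟩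
  · exact ⟨z3, by simp, by rw [abs_of_nonpos (by linarith), abs_of_neg s0,
      abs_of_neg s1, abs_of_nonneg s2, abs_of_nonneg s3]; linarith⟩
  · exact ⟨z2, by simp, by rw [abs_of_nonpos (by linarith), abs_of_neg s0,
      abs_of_neg s1, abs_of_nonneg s2, abs_of_neg s3]; linarith⟩
  · exact ⟨z1, by simp, by rw [abs_of_nonpos (by linarith), abs_of_neg s0,
      abs_of_neg s1, abs_of_neg s2, abs_of_nonneg s3]; linarith⟩
  · exact ⟨z0, by simp, by rw [abs_of_nonpos (by linarith), abs_of_neg s0,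
      abs_of_neg s1, abs_of_neg s2, abs_of_neg s3]; linarith⟩

lemma quad_sum (w : Fin 12 → ℝ) (hc : ∀ c : Fin 4, ∑ k : Fin 12, w k * paperVecs k c = 0) :
    ∑ i : Fin 12, ∑ j : Fin 12, (w i * w j) * (gramM i j / 12) = 0 := by
  have key : ∀ i j : Fin 12, (w i * w j) * (gramM i j / 12)
      = ∑ c : Fin 4, (w i * paperVecs i c) * (w j * paperVecs j c) / 12 := by
    intro i j
    rw [gramM_apply, Finset.sum_div, Finset.mul_sum]
    exact Finset.sum_congr rfl fun c _ => by ring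
  simp_rw [key]
  have swap1 : ∀ i : Fin 12, (∑ j : Fin 12, ∑ c : Fin 4,
      (w i * paperVecs i c) * (w j * paperVecs j c) / 12)
      = ∑ c : Fin 4, ∑ j : Fin 12, (w i * paperVecs i c) * (w j * paperVecs j c) / 12 :=
    fun i => Finset.sum_comm
  simp_rw [swap1]
  rw [Finset.sum_comm]
  refine Finset.sum_eq_zero fun c _ => ?_
  have : ∀ i : Fin 12, (∑ j : Fin 12, (w i * paperVecs i c) * (w j * paperVecs j c) / 12)
      = (w i * paperVecs i c) * ((∑ j : Fin 12, w j * paperVecs j c) / 12) := by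
    intro i
    rw [Finset.sum_div, Finset.mul_sum]
    exact Finset.sum_congr rfl fun j _ => by ring
  simp_rw [this, hc c]
  simp

lemma quad_eval {Ω : Type} [MeasurableSpace Ω] (μ : Measure Ω) (Y : Fin 12 → Ω → ℝ)
    (hint : ∀ i j : Fin 12, Integrable (fun ω => Y i ω * Y j ω) μ)
    (hEY : ∀ i j : Fin 12, ∫ ω, Y i ω * Y j ω ∂μ = gramM i j / 12)
    (w : Fin 12 → ℝ) (hc : ∀ c : Fin 4, ∑ k : Fin 12, w k * paperVecs k c = 0) :
    ∫ ω, (∑ k : Fin 12, w k * Y k ω)^2 ∂μ = 0 := by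
  have hexp : ∀ ω, (∑ k : Fin 12, w k * Y k ω)^2
      = ∑ i : Fin 12, ∑ j : Fin 12, (w i * w j) * (Y i ω * Y j ω) := by
    intro ω
    rw [sq, Finset.sum_mul_sum]
    exact Finset.sum_congr rfl fun i _ => Finset.sum_congr rfl fun j _ => by ring
  calc ∫ ω, (∑ k : Fin 12, w k * Y k ω)^2 ∂μ
      = ∫ ω, ∑ i : Fin 12, ∑ j : Fin 12, (w i * w j) * (Y i ω * Y j ω) ∂μ := by
        exact integral_congr_ae (Filter.Eventually.of_forall hexp)
    _ = ∑ i : Fin 12, ∑ j : Fin 12, (w i * w j) * ∫ ω, Y i ω * Y j ω ∂μ := by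
        rw [integral_finset_sum _ (fun i _ => integrable_finset_sum _
          (fun j _ => ((hint i j).const_mul _)))]
        refine Finset.sum_congr rfl fun i _ => ?_
        rw [integral_finset_sum _ (fun j _ => ((hint i j).const_mul _))]
        exact Finset.sum_congr rfl fun j _ => integral_const_mul _ _
    _ = ∑ i : Fin 12, ∑ j : Fin 12, (w i * w j) * (gramM i j / 12) := by
        simp_rw [hEY]
    _ = 0 := quad_sum w hc

set_option maxHeartbeats 1000000 in
lemma wvec_col (r : Fin 8) (c : Fin 4) : ∑ k : Fin 12, wvec r k * paperVecs k c = 0 := by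
  fin_cases r <;> fin_cases c <;>
    norm_num [wvec, paperVecs, Fin.sum_univ_succ]


set_option maxHeartbeats 2000000 in
theorem spearman_ne_psd_of_twelve_le' {d : ℕ} (hd : 12 ≤ d) :
    (gramMd d).PosSemidef ∧ (∀ i, gramMd d i i = 1) ∧ ¬ IsSpearmanMatrix (gramMd d) := by
  refine ⟨gramMd_posSemidef d hd, gramMd_diag d, ?_⟩
  rintro ⟨Ω, mΩ, μ, hprob, X, hXmeas, hXatom, hR⟩
  classical
  set ι : Fin 12 → Fin d := fun i => ⟨(i : ℕ), lt_of_lt_of_le i.2 hd⟩ with hι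
  have hνprob : ∀ i : Fin 12, IsProbabilityMeasure (Measure.map (fun ω => X ω (ι i)) μ) :=
    fun i => Measure.isProbabilityMeasure_map (hXmeas (ι i)).aemeasurable
  set U : Fin 12 → Ω → ℝ :=
    fun i ω => cdf (Measure.map (fun ω' => X ω' (ι i)) μ) (X ω (ι i)) with hUdef
  have hUmeas : ∀ i, Measurable (U i) :=
    fun i => (monotone_cdf _).measurable.comp (hXmeas (ι i))
  have hUmap : ∀ i, Measure.map (U i) μ = volume.restrict (Set.Icc (0:ℝ) 1) := by
    intro i
    haveI := hνprob i
    have hcomp : U i = (fun x => cdf (Measure.map (fun ω' => X ω' (ι i)) μ) x)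
        ∘ (fun ω => X ω (ι i)) := rfl
    rw [hcomp, ← Measure.map_map (monotone_cdf _).measurable (hXmeas (ι i))]
    exact map_cdf_eq_uniform _ (hXatom (ι i))
  have hU0 : ∀ i ω, 0 ≤ U i ω := fun i ω => cdf_nonneg _ _
  have hU1 : ∀ i ω, U i ω ≤ 1 := fun i ω => cdf_le_one _ _
  have hEU : ∀ i, ∫ ω, U i ω ∂μ = 1/2 := by
    intro i
    have h := integral_map (μ := μ) (φ := U i) (f := fun x => x)
      (hUmeas i).aemeasurable aestronglyMeasurable_id
    rw [hUmap i] at h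
    rw [← h, int_id]
  have hEabsU : ∀ i, ∫ ω, |U i ω - 1/2| ∂μ = 1/4 := by
    intro i
    have hg : Continuous (fun x : ℝ => |x - 1/2|) :=
      continuous_abs.comp (continuous_id.sub continuous_const)
    have h := integral_map (μ := μ) (φ := U i) (f := fun x => |x - 1/2|)
      (hUmeas i).aemeasurable hg.aestronglyMeasurable
    rw [hUmap i] at h
    rw [← h, int_absval]
  have hUne : ∀ (i : Fin 12) (a : ℝ), ∀ᵐ ω ∂μ, U i ω ≠ a := by
    intro i a
    have h0 : μ (U i ⁻¹' {a}) = 0 := by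
      rw [← Measure.map_apply (hUmeas i) (measurableSet_singleton a), hUmap i]
      refine le_antisymm (le_trans (Measure.restrict_le_self _) ?_) zero_le
      rw [Real.volume_singleton]
    rw [ae_iff]
    have hset : {ω | ¬ U i ω ≠ a} = U i ⁻¹' {a} := by ext ω; simp
    rw [hset]
    exact h0
  have hintU : ∀ i, Integrable (U i) μ := by
    intro i
    refine Integrable.mono' (integrable_const 1) (hUmeas i).aestronglyMeasurable ?_
    refine Filter.Eventually.of_forall fun ω => ?_
    rw [Real.norm_eq_abs, abs_le]
    exact ⟨by linarith [hU0 i ω], hU1 i ω⟩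
  have hintUU : ∀ i j, Integrable (fun ω => U i ω * U j ω) μ := by
    intro i j
    refine Integrable.mono' (integrable_const 1)
      ((hUmeas i).mul (hUmeas j)).aestronglyMeasurable ?_
    refine Filter.Eventually.of_forall fun ω => ?_
    rw [Real.norm_eq_abs, abs_mul, abs_of_nonneg (hU0 i ω), abs_of_nonneg (hU0 j ω)]
    exact mul_le_one₀ (hU1 i ω) (hU0 j ω) (hU1 j ω)
  set Y : Fin 12 → Ω → ℝ := fun i ω => U i ω - 1/2 with hYdef
  have hYmeas : ∀ i, Measurable (Y i) := fun i => (hUmeas i).sub measurable_const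
  have hYabs : ∀ i ω, |Y i ω| ≤ 1/2 := by
    intro i ω
    rw [hYdef, abs_le]
    constructor <;> [linarith [hU0 i ω]; linarith [hU1 i ω]]
  have hintY : ∀ i, Integrable (Y i) μ := fun i => (hintU i).sub (integrable_const _)
  have hintYY : ∀ i j : Fin 12, Integrable (fun ω => Y i ω * Y j ω) μ := by
    intro i j
    refine Integrable.mono' (integrable_const 1)
      ((hYmeas i).mul (hYmeas j)).aestronglyMeasurable ?_
    refine Filter.Eventually.of_forall fun ω => ?_
    rw [Real.norm_eq_abs, abs_mul]
    nlinarith [hYabs i ω, hYabs j ω, abs_nonneg (Y i ω), abs_nonneg (Y j ω)]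
  have hEUU : ∀ i j : Fin 12, ∫ ω, U i ω * U j ω ∂μ = (gramM i j + 3) / 12 := by
    intro i j
    have h := hR (ι i) (ι j)
    have hg : gramMd d (ι i) (ι j) = gramM i j := by
      have h1 : ((ι i : Fin d) : ℕ) < 12 := i.2
      have h2 : ((ι j : Fin d) : ℕ) < 12 := j.2
      simp only [gramMd, dif_pos h1, dif_pos h2]
      rfl
    rw [hg] at h
    have : (12:ℝ) * ∫ ω, U i ω * U j ω ∂μ - 3 = gramM i j := h.symm
    linarith
  have hEYY : ∀ i j : Fin 12, ∫ ω, Y i ω * Y j ω ∂μ = gramM i j / 12 := by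
    intro i j
    have hexp : (fun ω => Y i ω * Y j ω)
        = fun ω => (U i ω * U j ω - (1/2) * U i ω) - ((1/2) * U j ω - 1/4) := by
      funext ω
      rw [hYdef]
      ring
    have hA : Integrable (fun ω => U i ω * U j ω - 1/2 * U i ω) μ :=
      (hintUU i j).sub ((hintU i).const_mul _)
    have hB : Integrable (fun ω => 1/2 * U j ω - 1/4) μ :=
      ((hintU j).const_mul _).sub (integrable_const _)
    rw [hexp, integral_sub hA hB,
      integral_sub (hintUU i j) ((hintU i).const_mul _),
      integral_sub ((hintU j).const_mul _) (integrable_const _),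
      MeasureTheory.integral_const_mul, MeasureTheory.integral_const_mul, hEUU i j, hEU i, hEU j, integral_const]
    simp only [probReal_univ, measure_univ, ENNReal.toReal_one, smul_eq_mul, one_mul]
    ring
  have hzero : ∀ r : Fin 8, ∀ᵐ ω ∂μ, ∑ k : Fin 12, wvec r k * Y k ω = 0 := by
    intro r
    have hexp : ∀ ω, (∑ k : Fin 12, wvec r k * Y k ω)^2
        = ∑ i : Fin 12, ∑ j : Fin 12, (wvec r i * wvec r j) * (Y i ω * Y j ω) := by
      intro ω
      rw [sq, Finset.sum_mul_sum]
      exact Finset.sum_congr rfl fun i _ => Finset.sum_congr rfl fun j _ => by ring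
    have hintsq : Integrable (fun ω => (∑ k : Fin 12, wvec r k * Y k ω)^2) μ := by
      have : Integrable (fun ω => ∑ i : Fin 12, ∑ j : Fin 12,
          (wvec r i * wvec r j) * (Y i ω * Y j ω)) μ :=
        integrable_finset_sum _ (fun i _ => integrable_finset_sum _
          (fun j _ => (hintYY i j).const_mul _))
      exact this.congr (Filter.Eventually.of_forall fun ω => (hexp ω).symm)
    have h0 : ∫ ω, (∑ k : Fin 12, wvec r k * Y k ω)^2 ∂μ = 0 :=
      quad_eval μ Y hintYY hEYY _ (wvec_col r)
    have hae := (integral_eq_zero_iff_of_nonneg (fun ω => sq_nonneg _) hintsq).1 h0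
    filter_upwards [hae] with ω hω
    exact (pow_eq_zero_iff two_ne_zero).1 hω
  have hall : ∀ᵐ ω ∂μ, ∀ r : Fin 8, ∑ k : Fin 12, wvec r k * Y k ω = 0 :=
    (ae_all_iff).2 hzero
  have hpoint : ∀ ω, (∀ r : Fin 8, ∑ k : Fin 12, wvec r k * Y k ω = 0) →
      ∃ k : Fin 12, 2 * |Y k ω| = |Y 0 ω| + |Y 1 ω| + |Y 2 ω| + |Y 3 ω| := by
    intro ω h
    have e0 := h 0
    have e1 := h 1
    have e2 := h 2
    have e3 := h 3
    have e4 := h 4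
    have e5 := h 5
    have e6 := h 6
    have e7 := h 7
    simp only [Fin.sum_univ_succ, Finset.univ_eq_empty,
      Finset.sum_empty] at e0 e1 e2 e3 e4 e5 e6 e7
    norm_num at e0 e1 e2 e3 e4 e5 e6 e7
    obtain ⟨z, hz, hzeq⟩ := signcase (Y 0 ω) (Y 1 ω) (Y 2 ω) (Y 3 ω)
      (Y 4 ω) (Y 5 ω) (Y 6 ω) (Y 7 ω) (Y 8 ω) (Y 9 ω) (Y 10 ω) (Y 11 ω)
      (by linear_combination 2 * e0) (by linear_combination 2 * e1)
      (by linear_combination 2 * e2) (by linear_combination 2 * e3)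
      (by linear_combination 2 * e4) (by linear_combination 2 * e5)
      (by linear_combination 2 * e6) (by linear_combination 2 * e7)
    simp only [Finset.mem_insert, Finset.mem_singleton] at hz
    rcases hz with h|h|h|h|h|h|h|h
    · exact ⟨4, by rw [← h]; exact hzeq⟩
    · exact ⟨5, by rw [← h]; exact hzeq⟩
    · exact ⟨6, by rw [← h]; exact hzeq⟩
    · exact ⟨7, by rw [← h]; exact hzeq⟩
    · exact ⟨8, by rw [← h]; exact hzeq⟩
    · exact ⟨9, by rw [← h]; exact hzeq⟩
    · exact ⟨10, by rw [← h]; exact hzeq⟩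
    · exact ⟨11, by rw [← h]; exact hzeq⟩
  have hintabsY : ∀ i, Integrable (fun ω => |Y i ω|) μ := fun i => (hintY i).abs
  have hEabsY : ∀ i, ∫ ω, |Y i ω| ∂μ = 1/4 := fun i => hEabsU i
  have i01 : Integrable (fun ω => |Y 0 ω| + |Y 1 ω|) μ := (hintabsY 0).add (hintabsY 1)
  have i23 : Integrable (fun ω => |Y 2 ω| + |Y 3 ω|) μ := (hintabsY 2).add (hintabsY 3)
  have hsum4 : Integrable (fun ω => (|Y 0 ω| + |Y 1 ω|) + (|Y 2 ω| + |Y 3 ω|)) μ :=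
    i01.add i23
  have hTval : ∫ ω, ((|Y 0 ω| + |Y 1 ω|) + (|Y 2 ω| + |Y 3 ω|)) ∂μ = 1 := by
    rw [integral_add i01 i23, integral_add (hintabsY 0) (hintabsY 1),
      integral_add (hintabsY 2) (hintabsY 3), hEabsY 0, hEabsY 1, hEabsY 2, hEabsY 3]
    norm_num
  have hET : ∫ ω, (1 - ((|Y 0 ω| + |Y 1 ω|) + (|Y 2 ω| + |Y 3 ω|))) ∂μ = 0 := by
    rw [integral_sub (integrable_const _) hsum4, hTval, MeasureTheory.integral_const]
    simp
  have hTnn : ∀ᵐ ω ∂μ, 0 ≤ 1 - ((|Y 0 ω| + |Y 1 ω|) + (|Y 2 ω| + |Y 3 ω|)) := by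
    filter_upwards [hall] with ω hω
    obtain ⟨k, hk⟩ := hpoint ω hω
    have := hYabs k ω
    linarith
  have hintT : Integrable (fun ω => 1 - ((|Y 0 ω| + |Y 1 ω|) + (|Y 2 ω| + |Y 3 ω|))) μ :=
    (integrable_const _).sub hsum4
  have hT1 := (integral_eq_zero_iff_of_nonneg_ae hTnn hintT).1 hET
  have hne01 : ∀ᵐ ω ∂μ, ∀ k : Fin 12, U k ω ≠ 0 ∧ U k ω ≠ 1 :=
    (ae_all_iff).2 fun k => (hUne k 0).and (hUne k 1)
  have hfinal : ∀ᵐ ω ∂μ, False := by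
    filter_upwards [hall, hT1, hne01] with ω h1 h2 h3
    obtain ⟨k, hk⟩ := hpoint ω h1
    have h2' : |Y 0 ω| + |Y 1 ω| + |Y 2 ω| + |Y 3 ω| = 1 := by
      have h2'' : (1:ℝ) - ((|Y 0 ω| + |Y 1 ω|) + (|Y 2 ω| + |Y 3 ω|)) = 0 := h2
      linarith
    have habs : |Y k ω| = 1/2 := by rw [h2'] at hk; linarith
    have hYk : Y k ω = U k ω - 1/2 := rfl
    rcases abs_eq (by norm_num : (0:ℝ) ≤ 1/2) |>.1 habs with h|h
    · exact (h3 k).2 (by rw [hYk] at h; linarith)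
    · exact (h3 k).1 (by rw [hYk] at h; linarith)
  haveI : (ae μ).NeBot := ae_neBot.2 (IsProbabilityMeasure.ne_zero μ)
  obtain ⟨ω, hω⟩ := hfinal.exists
  exact hω

end SpearmanAux

/-- For every d ≥ 12 there is a standardized symmetric positive semidefinite d × d matrix
that is not a Spearman's rho matrix, namely diag(M, I_{d-12}). -/
theorem spearman_ne_psd_of_twelve_le {d : ℕ} (hd : 12 ≤ d) :
    (gramMd d).PosSemidef ∧ (∀ i, gramMd d i i = 1) ∧ ¬ IsSpearmanMatrix (gramMd d) :=
  SpearmanAux.spearman_ne_psd_of_twelve_le' hd
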